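/- arXiv:1707.06688 — 2 statements merged into one kernel-verified Lean document; each statement's English description precedes it below -/
import Mathlib

section
/- (Error Probability Bound) Let Λ ⊂ ℝ^n be a full-rank lattice, σ_s, σ_w > 0, ε ∈ (0,1), α = σ_s²/(σ_s²+σ_w²), σ_eff² = σ_s²σ_w²/(σ_s²+σ_w²). Assume the normalization σ_eff · err⁻¹_ε(Λ) = 1. For t ∈ ℝ^n let E(t) = Pr[(1−α)X_t + αW ∉ V(Λ)], where X_t ~ D_{Λ+t, σ_s} and W ~ N(0, σ_w² I_n) are independent. Then for every γ ≥ 1, the set {t : E(t) ≥ γε} has measure at most 1/γ under the Gaussian measure N(0, σ_s² I_n). -/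
open MeasureTheory Real Filter Pointwise
open scoped ENNReal RealInnerProductSpace

noncomputable section

/-- The (continuous) Gaussian density with parameter `σ` on `ℝⁿ`:
`f_σ(x) = (2πσ²)^{-n/2} exp(-‖x‖²/(2σ²))`. -/
def gaussF (n : ℕ) (σ : ℝ) (x : EuclideanSpace ℝ (Fin n)) : ℝ :=
  (2 * π * σ ^ 2) ^ (-(n : ℝ) / 2) * Real.exp (-‖x‖ ^ 2 / (2 * σ ^ 2))

/-- The Gaussian mass `f_σ(S) = Σ_{y ∈ S} f_σ(y)` of a (countable) set `S ⊆ ℝⁿ`. -/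
def gaussMass (n : ℕ) (σ : ℝ) (S : Set (EuclideanSpace ℝ (Fin n))) : ℝ :=
  ∑' y : S, gaussF n σ y

/-- The Gaussian measure `N(0, σ² Iₙ)` on `ℝⁿ`, given by its density w.r.t. Lebesgue measure. -/
def gaussMeasure (n : ℕ) (σ : ℝ) : Measure (EuclideanSpace ℝ (Fin n)) :=
  volume.withDensity fun x => ENNReal.ofReal (gaussF n σ x)

/-- The coset `S + t` of a set `S ⊆ ℝⁿ`, i.e. `{x | x - t ∈ S}`. -/
def coset (n : ℕ) (S : Set (EuclideanSpace ℝ (Fin n))) (t : EuclideanSpace ℝ (Fin n)) :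
    Set (EuclideanSpace ℝ (Fin n)) := {x | x - t ∈ S}

/-- The Voronoi cell of `S`: `{x | ⟪x,y⟫ ≤ ‖y‖²/2 for all y ∈ S}`. -/
def voronoi (n : ℕ) (S : Set (EuclideanSpace ℝ (Fin n))) : Set (EuclideanSpace ℝ (Fin n)) :=
  {x | ∀ y ∈ S, ⟪x, y⟫ ≤ ‖y‖ ^ 2 / 2}

/-- The inverse error function `err⁻¹_ε(Λ)`: the least `s > 0` such that a standard Gaussian
leaves `s · V(Λ)` with probability at most `ε`. -/
def errInv (n : ℕ) (ε : ℝ) (S : Set (EuclideanSpace ℝ (Fin n))) : ℝ :=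
  sInf {s : ℝ | 0 < s ∧ gaussMeasure n 1 ((s • voronoi n S)ᶜ) ≤ ENNReal.ofReal ε}

/-- The Shannon entropy (in nats) of the discrete Gaussian `D_{S,σ}` supported on `S`,
which assigns mass `f_σ(y)/f_σ(S)` to each `y ∈ S`. -/
def dgEntropy (n : ℕ) (σ : ℝ) (S : Set (EuclideanSpace ℝ (Fin n))) : ℝ :=
  -∑' y : S, (gaussF n σ y / gaussMass n σ S) * Real.log (gaussF n σ y / gaussMass n σ S)

/-- The flatness factor `ε_Λ(σ) = sup_{x ∈ V(Λ)} |V(Λ)·f_σ(Λ+x) − 1|`. -/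
def flatness (n : ℕ) (L : Submodule ℤ (EuclideanSpace ℝ (Fin n))) (σ : ℝ) : ℝ :=
  ⨆ x : voronoi n (L : Set (EuclideanSpace ℝ (Fin n))),
    |ZLattice.covolume L volume *
        gaussMass n σ (coset n (L : Set (EuclideanSpace ℝ (Fin n))) x) - 1|


open scoped Topology

-- basic lemmas
lemma gaussF_nonneg (n : ℕ) (σ : ℝ) (x : EuclideanSpace ℝ (Fin n)) : 0 ≤ gaussF n σ x := by
  unfold gaussF; positivity

lemma continuous_gaussF (n : ℕ) (σ : ℝ) : Continuous (gaussF n σ) := by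
  unfold gaussF; fun_prop

lemma measurable_gaussF (n : ℕ) (σ : ℝ) : Measurable (gaussF n σ) :=
  (continuous_gaussF n σ).measurable

lemma integrable_gaussF (n : ℕ) {σ : ℝ} (hσ : 0 < σ) :
    Integrable (gaussF n σ) := by
  have hb : (0:ℝ) < 1 / (2 * σ ^ 2) := by positivity
  have h : Integrable (fun v : EuclideanSpace ℝ (Fin n) =>
      Real.exp (-(1 / (2 * σ ^ 2)) * ‖v‖ ^ 2)) := by
    have := (GaussianFourier.integrable_cexp_neg_mul_sq_norm_add
      (V := EuclideanSpace ℝ (Fin n)) (b := ((1 / (2 * σ ^ 2) : ℝ) : ℂ))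
      (by rw [Complex.ofReal_re]; positivity) 0 0).norm
    refine this.congr (Eventually.of_forall fun v => ?_)
    dsimp only
    rw [Complex.norm_exp]
    congr 1
    rw [zero_mul, add_zero]
    norm_cast
  have := h.const_mul ((2 * π * σ ^ 2) ^ (-(n : ℝ) / 2))
  refine this.congr (Eventually.of_forall fun v => ?_)
  unfold gaussF
  ring_nf

lemma integral_gaussF (n : ℕ) {σ : ℝ} (hσ : 0 < σ) :
    ∫ x, gaussF n σ x = 1 := by
  have hb : (0:ℝ) < 1 / (2 * σ ^ 2) := by positivity
  have h := GaussianFourier.integral_rexp_neg_mul_sq_norm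
    (V := EuclideanSpace ℝ (Fin n)) hb
  unfold gaussF
  rw [MeasureTheory.integral_const_mul]
  have : ∀ x : EuclideanSpace ℝ (Fin n),
      Real.exp (-‖x‖ ^ 2 / (2 * σ ^ 2)) = Real.exp (-(1 / (2 * σ ^ 2)) * ‖x‖ ^ 2) := by
    intro x; ring_nf
  rw [integral_congr_ae (Eventually.of_forall this), h, finrank_euclideanSpace_fin]
  have h1 : π / (1 / (2 * σ ^ 2)) = 2 * π * σ ^ 2 := by
    field_simp
  rw [h1, ← Real.rpow_add (by positivity), neg_div, neg_add_cancel, Real.rpow_zero]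

lemma lintegral_gaussF (n : ℕ) {σ : ℝ} (hσ : 0 < σ) :
    ∫⁻ x, ENNReal.ofReal (gaussF n σ x) = 1 := by
  rw [← MeasureTheory.ofReal_integral_eq_lintegral_ofReal (integrable_gaussF n hσ)
    (Eventually.of_forall (gaussF_nonneg n σ)), integral_gaussF n hσ]
  simp

-- real tsum via ennreal
lemma real_tsum_eq_toReal {ι : Type*} (h : ι → ℝ) (h0 : ∀ i, 0 ≤ h i) :
    ∑' i, h i = (∑' i, ENNReal.ofReal (h i)).toReal := by
  by_cases hs : Summable h
  · rw [← ENNReal.ofReal_tsum_of_nonneg h0 hs, ENNReal.toReal_ofReal (tsum_nonneg h0)]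
  · rw [tsum_eq_zero_of_not_summable hs]
    have : ∑' i, ENNReal.ofReal (h i) = ∞ := by
      by_contra hne
      have := ENNReal.summable_toReal hne
      refine hs (this.congr fun i => ?_)
      rw [ENNReal.toReal_ofReal (h0 i)]
    rw [this]; simp

lemma gauss_split (n : ℕ) {σs σw : ℝ} (hσs : 0 < σs) (hσw : 0 < σw)
    (y z : EuclideanSpace ℝ (Fin n)) :
    gaussF n σs (y - (σs^2/(σs^2+σw^2)) • z) * gaussF n σw (y + (1 - σs^2/(σs^2+σw^2)) • z)
      = gaussF n (Real.sqrt (σs^2*σw^2/(σs^2+σw^2))) y * gaussF n (Real.sqrt (σs^2+σw^2)) z := by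
  have hSW : (0:ℝ) < σs^2 + σw^2 := by positivity
  have hse : (Real.sqrt (σs^2*σw^2/(σs^2+σw^2)))^2 = σs^2*σw^2/(σs^2+σw^2) :=
    Real.sq_sqrt (by positivity)
  have hst : (Real.sqrt (σs^2+σw^2))^2 = σs^2+σw^2 := Real.sq_sqrt (by positivity)
  unfold gaussF
  rw [mul_mul_mul_comm, mul_mul_mul_comm ((2 * π * (Real.sqrt (σs^2*σw^2/(σs^2+σw^2)))^2) ^ (-(n:ℝ) / 2)),
      ← Real.mul_rpow (by positivity) (by positivity),
      ← Real.mul_rpow (by positivity) (by positivity),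
      ← Real.exp_add, ← Real.exp_add]
  congr 2
  · rw [hse, hst]; field_simp
  · have e1 : ‖y - (σs^2/(σs^2+σw^2)) • z‖^2
        = ‖y‖^2 - 2 * ((σs^2/(σs^2+σw^2)) * ⟪y, z⟫) + (σs^2/(σs^2+σw^2))^2 * ‖z‖^2 := by
      rw [@norm_sub_sq_real, real_inner_smul_right, norm_smul]
      simp [mul_pow, sq_abs, abs_of_pos hSW]
    have e2 : ‖y + (1 - σs^2/(σs^2+σw^2)) • z‖^2
        = ‖y‖^2 + 2 * ((1 - σs^2/(σs^2+σw^2)) * ⟪y, z⟫) + (1 - σs^2/(σs^2+σw^2))^2 * ‖z‖^2 := by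
      rw [@norm_add_sq_real, real_inner_smul_right, norm_smul]
      simp [mul_pow, sq_abs, abs_of_pos hSW]
    rw [e1, e2, hse, hst]
    have h1 : σs ≠ 0 := ne_of_gt hσs
    have h2 : σw ≠ 0 := ne_of_gt hσw
    field_simp
    ring


lemma gauss_split' (n : ℕ) {σs σw α σeff στ : ℝ} (hσs : 0 < σs) (hσw : 0 < σw)
    (hα : α = σs^2/(σs^2+σw^2)) (hσeff : σeff = Real.sqrt (σs^2*σw^2/(σs^2+σw^2)))
    (hστ : στ = Real.sqrt (σs^2+σw^2))
    (y z : EuclideanSpace ℝ (Fin n)) :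
    gaussF n σs (y - α • z) * gaussF n σw (y + (1-α) • z)
      = gaussF n σeff y * gaussF n στ z := by
  subst hα hσeff hστ
  exact gauss_split n hσs hσw y z

lemma voronoi_closed (n : ℕ) (S : Set (EuclideanSpace ℝ (Fin n))) :
    IsClosed (voronoi n S) := by
  have : voronoi n S = ⋂ y ∈ S, {x : EuclideanSpace ℝ (Fin n) | ⟪x, y⟫ ≤ ‖y‖ ^ 2 / 2} := by
    ext x; simp [voronoi]
  rw [this]
  refine isClosed_biInter fun y _ => isClosed_le ?_ continuous_const
  exact (continuous_id.inner continuous_const)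

lemma voronoi_star (n : ℕ) (S : Set (EuclideanSpace ℝ (Fin n)))
    {x : EuclideanSpace ℝ (Fin n)} (hx : x ∈ voronoi n S) {c : ℝ} (hc0 : 0 ≤ c) (hc1 : c ≤ 1) :
    c • x ∈ voronoi n S := by
  intro y hy
  rw [real_inner_smul_left]
  calc c * ⟪x, y⟫ ≤ c * (‖y‖ ^ 2 / 2) := mul_le_mul_of_nonneg_left (hx y hy) hc0
    _ ≤ ‖y‖ ^ 2 / 2 := mul_le_of_le_one_left (by positivity) hc1

lemma voronoi_smul_subset (n : ℕ) (S : Set (EuclideanSpace ℝ (Fin n)))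
    {a b : ℝ} (ha : 0 < a) (hab : a ≤ b) :
    a • voronoi n S ⊆ b • voronoi n S := by
  have hb : 0 < b := lt_of_lt_of_le ha hab
  rintro _ ⟨v, hv, rfl⟩
  refine ⟨(a / b) • v, voronoi_star n S hv (by positivity) (div_le_one_of_le₀ hab hb.le), ?_⟩
  show b • ((a / b) • v) = a • v
  rw [smul_smul]
  congr 1
  field_simp

lemma errInv_spec (n : ℕ) (ε : ℝ) (S : Set (EuclideanSpace ℝ (Fin n)))
    (hpos : 0 < errInv n ε S) :
    gaussMeasure n 1 ((errInv n ε S • voronoi n S)ᶜ) ≤ ENNReal.ofReal ε := by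
  set V := voronoi n S with hV
  set Sval := {s : ℝ | 0 < s ∧ gaussMeasure n 1 ((s • V)ᶜ) ≤ ENNReal.ofReal ε} with hSval
  have herr : errInv n ε S = sInf Sval := rfl
  have hne : Sval.Nonempty := by
    by_contra h
    rw [Set.not_nonempty_iff_eq_empty] at h
    rw [herr, h, Real.sInf_empty] at hpos
    exact lt_irrefl 0 hpos
  have hbdd : BddBelow Sval := ⟨0, fun s hs => le_of_lt hs.1⟩
  obtain ⟨u, hanti, htends, hmem⟩ := exists_seq_tendsto_sInf hne hbdd
  rw [← herr] at htends
  have hu0 : ∀ k, 0 < u k := fun k => (hmem k).1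
  have hs0le : ∀ k, errInv n ε S ≤ u k := fun k => herr ▸ csInf_le hbdd (hmem k)
  have hmono : Monotone (fun k => (u k • V)ᶜ) := by
    intro k l hkl
    exact Set.compl_subset_compl.2 (voronoi_smul_subset n S (hu0 l) (hanti hkl))
  have hUnion : ⋃ k, (u k • V)ᶜ = (errInv n ε S • V)ᶜ := by
    apply Set.Subset.antisymm
    · refine Set.iUnion_subset fun k => Set.compl_subset_compl.2 ?_
      exact voronoi_smul_subset n S hpos (hs0le k)
    · intro x hx
      by_contra hco
      simp only [Set.mem_iUnion, Set.mem_compl_iff, not_exists, not_not] at hco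
      apply hx
      have hmemV : ∀ k, (u k)⁻¹ • x ∈ V := fun k =>
        (Set.mem_smul_set_iff_inv_smul_mem₀ (ne_of_gt (hu0 k)) V x).1 (hco k)
      have hlim : Tendsto (fun k => (u k)⁻¹ • x) atTop (𝓝 ((errInv n ε S)⁻¹ • x)) :=
        (htends.inv₀ (ne_of_gt hpos)).smul_const x
      have : (errInv n ε S)⁻¹ • x ∈ V :=
        (voronoi_closed n S).mem_of_tendsto hlim (Eventually.of_forall hmemV)
      exact (Set.mem_smul_set_iff_inv_smul_mem₀ (ne_of_gt hpos) V x).2 this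
  have := tendsto_measure_iUnion_atTop (μ := gaussMeasure n 1) hmono
  rw [hUnion] at this
  exact le_of_tendsto this (Eventually.of_forall fun k => (hmem k).2)

lemma gaussF_one_eq (n : ℕ) {σ : ℝ} (hσ : 0 < σ) (y : EuclideanSpace ℝ (Fin n)) :
    ENNReal.ofReal (gaussF n 1 y)
      = ENNReal.ofReal (σ ^ n) * ENNReal.ofReal (gaussF n σ (σ • y)) := by
  rw [← ENNReal.ofReal_mul (by positivity)]
  congr 1
  unfold gaussF
  have hns : ‖σ • y‖ ^ 2 = σ ^ 2 * ‖y‖ ^ 2 := by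
    rw [norm_smul]; rw [mul_pow, Real.norm_eq_abs, sq_abs]
  rw [hns]
  have hexp : -(σ ^ 2 * ‖y‖ ^ 2) / (2 * σ ^ 2) = -‖y‖ ^ 2 / (2 * 1 ^ 2) := by
    field_simp
  rw [hexp]
  have hconst : σ ^ n * (2 * π * σ ^ 2) ^ (-(n:ℝ) / 2) = (2 * π * 1 ^ 2) ^ (-(n:ℝ) / 2) := by
    rw [Real.mul_rpow (by positivity) (by positivity)]
    have h2 : (σ ^ 2 : ℝ) = σ ^ ((2:ℕ):ℝ) := by rw [Real.rpow_natCast]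
    rw [h2, ← Real.rpow_natCast σ n, ← Real.rpow_mul hσ.le,
      mul_comm ((2*π) ^ (-(n:ℝ)/2)) _, ← mul_assoc, ← Real.rpow_add hσ,
      show (n:ℝ) + ((2:ℕ):ℝ) * (-(n:ℝ)/2) = 0 by push_cast; ring, Real.rpow_zero, one_mul]
    norm_num
  rw [← hconst]
  ring

lemma gaussMeasure_smul (n : ℕ) {σ : ℝ} (hσ : 0 < σ) {A : Set (EuclideanSpace ℝ (Fin n))}
    (hA : MeasurableSet A) :
    gaussMeasure n σ A = gaussMeasure n 1 ((σ • ·) ⁻¹' A) := by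
  have hA' : MeasurableSet ((σ • ·) ⁻¹' A : Set (EuclideanSpace ℝ (Fin n))) :=
    hA.preimage (measurable_const_smul σ)
  unfold gaussMeasure
  rw [withDensity_apply _ hA, withDensity_apply _ hA']
  rw [← lintegral_indicator hA, ← lintegral_indicator hA']
  symm
  have key : ∀ y : EuclideanSpace ℝ (Fin n),
      ((σ • ·) ⁻¹' A).indicator (fun x => ENNReal.ofReal (gaussF n 1 x)) y
        = ENNReal.ofReal (σ ^ n) *
            A.indicator (fun x => ENNReal.ofReal (gaussF n σ x)) (σ • y) := by
    intro y
    by_cases hy : σ • y ∈ A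
    · rw [Set.indicator_of_mem (by exact hy), Set.indicator_of_mem hy, gaussF_one_eq n hσ]
    · rw [Set.indicator_of_notMem (by exact hy), Set.indicator_of_notMem hy, mul_zero]
  calc ∫⁻ y, ((σ • ·) ⁻¹' A).indicator (fun x => ENNReal.ofReal (gaussF n 1 x)) y
      = ∫⁻ y, ENNReal.ofReal (σ ^ n) *
          A.indicator (fun x => ENNReal.ofReal (gaussF n σ x)) (σ • y) := by
        exact lintegral_congr key
    _ = ENNReal.ofReal (σ ^ n) *
          ∫⁻ y, A.indicator (fun x => ENNReal.ofReal (gaussF n σ x)) (σ • y) := by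
        rw [lintegral_const_mul]
        exact ((measurable_gaussF n σ).ennreal_ofReal.indicator hA).comp
          (measurable_const_smul σ)
    _ = ENNReal.ofReal (σ ^ n) *
          ∫⁻ x, A.indicator (fun x => ENNReal.ofReal (gaussF n σ x)) x
            ∂(Measure.map (σ • ·) volume) := by
        rw [lintegral_map ((measurable_gaussF n σ).ennreal_ofReal.indicator hA)
          (measurable_const_smul σ)]
    _ = ∫⁻ x, A.indicator (fun x => ENNReal.ofReal (gaussF n σ x)) x := by
        rw [Measure.map_addHaar_smul volume (ne_of_gt hσ), lintegral_smul_measure]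
        rw [smul_eq_mul, ← mul_assoc, ← ENNReal.ofReal_mul (by positivity), finrank_euclideanSpace_fin]
        rw [abs_of_pos (by positivity), mul_inv_cancel₀ (by positivity), ENNReal.ofReal_one,
          one_mul]

/-- Error Probability Bound: under the normalization `σ_eff · err⁻¹_ε(Λ) = 1`,
for every `γ ≥ 1` the Gaussian measure of the set of dithers `t` whose decoding error
probability `E(t)` is at least `γε` is at most `1/γ`. -/
theorem error_probability_bound (n : ℕ) (L : Submodule ℤ (EuclideanSpace ℝ (Fin n)))
    [DiscreteTopology L] [IsZLattice ℝ L]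
    (σs σw ε : ℝ) (hσs : 0 < σs) (hσw : 0 < σw) (hε0 : 0 < ε) (hε1 : ε < 1)
    (α σeff : ℝ)
    (hα : α = σs ^ 2 / (σs ^ 2 + σw ^ 2))
    (hσeff : σeff = Real.sqrt (σs ^ 2 * σw ^ 2 / (σs ^ 2 + σw ^ 2)))
    (hnorm : σeff * errInv n ε (L : Set (EuclideanSpace ℝ (Fin n))) = 1)
    (γ : ℝ) (hγ : 1 ≤ γ) :
    gaussMeasure n σs {t : EuclideanSpace ℝ (Fin n) |
      γ * ε ≤ ∑' x : coset n (L : Set (EuclideanSpace ℝ (Fin n))) t,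
        (gaussF n σs x / gaussMass n σs (coset n (L : Set (EuclideanSpace ℝ (Fin n))) t)) *
          ∫ w in {w : EuclideanSpace ℝ (Fin n) |
              (1 - α) • (x : EuclideanSpace ℝ (Fin n)) + α • w ∉ voronoi n (L : Set (EuclideanSpace ℝ (Fin n)))},
            gaussF n σw w} ≤ ENNReal.ofReal (1 / γ) := by
  classical
  -- notation
  set Λ : Set (EuclideanSpace ℝ (Fin n)) := (L : Set (EuclideanSpace ℝ (Fin n))) with hΛ
  set V : Set (EuclideanSpace ℝ (Fin n)) := voronoi n Λ with hVdef
  have hVm : MeasurableSet V := (voronoi_closed n Λ).measurableSet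
  have hVcm : MeasurableSet Vᶜ := hVm.compl
  have hσeff_pos : 0 < σeff := by
    rw [hσeff]; apply Real.sqrt_pos.2; positivity
  have hστ_pos : (0:ℝ) < Real.sqrt (σs ^ 2 + σw ^ 2) := by
    apply Real.sqrt_pos.2; positivity
  -- the bad-event set and decoding-error weight
  set g : EuclideanSpace ℝ (Fin n) → ℝ := fun x =>
    ∫ w in {w : EuclideanSpace ℝ (Fin n) | (1 - α) • x + α • w ∉ V}, gaussF n σw w with hgdef
  have hBadm : ∀ x : EuclideanSpace ℝ (Fin n),
      MeasurableSet {w : EuclideanSpace ℝ (Fin n) | (1 - α) • x + α • w ∉ V} := by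
    intro x
    have : {w : EuclideanSpace ℝ (Fin n) | (1 - α) • x + α • w ∉ V}
        = (fun w : EuclideanSpace ℝ (Fin n) => (1 - α) • x + α • w) ⁻¹' Vᶜ := rfl
    rw [this]
    exact hVcm.preimage (by fun_prop)
  have hg_nonneg : ∀ x, 0 ≤ g x := fun x =>
    setIntegral_nonneg (hBadm x) fun w _ => gaussF_nonneg n σw w
  -- product indicator
  set D : EuclideanSpace ℝ (Fin n) × EuclideanSpace ℝ (Fin n) → ℝ≥0∞ :=
    ({p : EuclideanSpace ℝ (Fin n) × EuclideanSpace ℝ (Fin n) |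
      (1 - α) • p.1 + α • p.2 ∉ V}).indicator (fun _ => 1) with hDdef
  have hBm : MeasurableSet {p : EuclideanSpace ℝ (Fin n) × EuclideanSpace ℝ (Fin n) |
      (1 - α) • p.1 + α • p.2 ∉ V} := by
    have : {p : EuclideanSpace ℝ (Fin n) × EuclideanSpace ℝ (Fin n) |
        (1 - α) • p.1 + α • p.2 ∉ V}
        = (fun p : EuclideanSpace ℝ (Fin n) × EuclideanSpace ℝ (Fin n) =>
            (1 - α) • p.1 + α • p.2) ⁻¹' Vᶜ := rfl
    rw [this]
    exact hVcm.preimage (by fun_prop)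
  have hDm : Measurable D := measurable_const.indicator hBm
  set G : EuclideanSpace ℝ (Fin n) → ℝ≥0∞ := fun x =>
    ∫⁻ w, D (x, w) * ENNReal.ofReal (gaussF n σw w) with hGdef
  have hGm : Measurable G := by
    apply Measurable.lintegral_prod_right
    exact hDm.mul ((measurable_gaussF n σw).ennreal_ofReal.comp measurable_snd)
  have hgG : ∀ x, g x = (G x).toReal := by
    intro x
    rw [hgdef]
    dsimp only
    rw [integral_eq_lintegral_of_nonneg_ae
      (Eventually.of_forall fun w => gaussF_nonneg n σw w)
      ((continuous_gaussF n σw).aestronglyMeasurable.restrict),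
      ← lintegral_indicator (hBadm x)]
    congr 1
    apply lintegral_congr
    intro w
    by_cases hw : (1 - α) • x + α • w ∉ V
    · rw [Set.indicator_of_mem
        (show w ∈ {w : EuclideanSpace ℝ (Fin n) | (1 - α) • x + α • w ∉ V} from hw), hDdef,
        Set.indicator_of_mem (show (x, w) ∈ {p : EuclideanSpace ℝ (Fin n) × EuclideanSpace ℝ (Fin n) |
          (1 - α) • p.1 + α • p.2 ∉ V} from hw), one_mul]
    · rw [Set.indicator_of_notMem
        (show w ∉ {w : EuclideanSpace ℝ (Fin n) | (1 - α) • x + α • w ∉ V} from hw), hDdef,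
        Set.indicator_of_notMem (show (x, w) ∉ {p : EuclideanSpace ℝ (Fin n) × EuclideanSpace ℝ (Fin n) |
          (1 - α) • p.1 + α • p.2 ∉ V} from hw), zero_mul]
  have hgm : Measurable g := by
    have : g = fun x => (G x).toReal := funext hgG
    rw [this]
    exact hGm.ennreal_toReal
  -- reindexing cosets by the lattice
  set e : (t : EuclideanSpace ℝ (Fin n)) → (↥L ≃ ↥(coset n Λ t)) := fun t =>
    { toFun := fun c => ⟨t + (c : EuclideanSpace ℝ (Fin n)), by
        simp only [coset, Set.mem_setOf_eq, add_sub_cancel_left]; exact c.2⟩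
      invFun := fun x => ⟨(x : EuclideanSpace ℝ (Fin n)) - t, x.2⟩
      left_inv := fun c => by ext; simp
      right_inv := fun x => by ext; simp } with hedef
  have hMass : ∀ t, gaussMass n σs (coset n Λ t)
      = ∑' c : ↥L, gaussF n σs (t + (c : EuclideanSpace ℝ (Fin n))) := by
    intro t
    exact (Equiv.tsum_eq (e t) (fun y : ↥(coset n Λ t) =>
      gaussF n σs (y : EuclideanSpace ℝ (Fin n)))).symm
  have hMm : Measurable (fun t => gaussMass n σs (coset n Λ t)) := by
    have h1 : (fun t => gaussMass n σs (coset n Λ t)) = fun t =>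
        (∑' c : ↥L, ENNReal.ofReal (gaussF n σs (t + (c : EuclideanSpace ℝ (Fin n))))).toReal := by
      funext t
      rw [hMass t, real_tsum_eq_toReal _ (fun c => gaussF_nonneg n σs _)]
    rw [h1]
    apply Measurable.ennreal_toReal
    apply Measurable.ennreal_tsum
    intro c
    exact ((measurable_gaussF n σs).comp (measurable_id.add_const _)).ennreal_ofReal
  -- the summand family
  set term : ↥L → EuclideanSpace ℝ (Fin n) → ℝ := fun c t =>
    gaussF n σs (t + (c : EuclideanSpace ℝ (Fin n))) / gaussMass n σs (coset n Λ t)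
      * g (t + (c : EuclideanSpace ℝ (Fin n))) with htermdef
  have hterm_nonneg : ∀ c t, 0 ≤ term c t := by
    intro c t
    apply mul_nonneg (div_nonneg (gaussF_nonneg n σs _)
      (tsum_nonneg fun y => gaussF_nonneg n σs _)) (hg_nonneg _)
  have hterm_m : ∀ c : ↥L, Measurable (term c) := by
    intro c
    apply Measurable.mul
    · exact ((measurable_gaussF n σs).comp (measurable_id.add_const _)).div hMm
    · exact hgm.comp (measurable_id.add_const _)
  set T : EuclideanSpace ℝ (Fin n) → ℝ≥0∞ := fun t =>
    ∑' c : ↥L, ENNReal.ofReal (term c t) with hTdef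
  have hTm : Measurable T :=
    Measurable.ennreal_tsum fun c => (hterm_m c).ennreal_ofReal
  have hEt : ∀ t, (∑' x : coset n Λ t,
      (gaussF n σs x / gaussMass n σs (coset n Λ t)) *
        ∫ w in {w : EuclideanSpace ℝ (Fin n) |
            (1 - α) • (x : EuclideanSpace ℝ (Fin n)) + α • w ∉ V}, gaussF n σw w)
      = (T t).toReal := by
    intro t
    rw [← Equiv.tsum_eq (e t), hTdef]
    exact real_tsum_eq_toReal _ (fun c => hterm_nonneg c t)

  -- rewrite the goal set
  have hgoalset : {t : EuclideanSpace ℝ (Fin n) |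
      γ * ε ≤ ∑' x : coset n Λ t,
        (gaussF n σs x / gaussMass n σs (coset n Λ t)) *
          ∫ w in {w : EuclideanSpace ℝ (Fin n) |
              (1 - α) • (x : EuclideanSpace ℝ (Fin n)) + α • w ∉ V}, gaussF n σw w}
      = {t : EuclideanSpace ℝ (Fin n) |
          ENNReal.ofReal (γ * ε) ≤ ENNReal.ofReal ((T t).toReal)} := by
    ext t
    simp only [Set.mem_setOf_eq]
    rw [hEt t, ENNReal.ofReal_le_ofReal_iff ENNReal.toReal_nonneg]
  rw [hgoalset]
  -- Markov inequality
  have hmarkov := mul_meas_ge_le_lintegral₀ (μ := gaussMeasure n σs)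
    (f := fun t => ENNReal.ofReal ((T t).toReal))
    (hTm.ennreal_toReal.ennreal_ofReal.aemeasurable) (ENNReal.ofReal (γ * ε))
  -- abbreviations for the chain
  set στ : ℝ := Real.sqrt (σs ^ 2 + σw ^ 2) with hστdef
  set χ : EuclideanSpace ℝ (Fin n) → ℝ≥0∞ := (Vᶜ).indicator (fun _ => 1) with hχdef
  have hχm : Measurable χ := measurable_const.indicator hVcm
  have hpt : ∀ u z : EuclideanSpace ℝ (Fin n), (1 - α) • u + α • (u + z) = u + α • z := by
    intro u z
    rw [sub_smul, one_smul, smul_add]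
    abel
  have hDχ : ∀ u z : EuclideanSpace ℝ (Fin n), D (u, u + z) = χ (u + α • z) := by
    intro u z
    rw [hDdef, hχdef]
    by_cases h : u + α • z ∈ V
    · rw [Set.indicator_of_notMem, Set.indicator_of_notMem]
      · simpa using h
      · simp only [Set.mem_setOf_eq, hpt u z]
        exact not_not_intro h
    · rw [Set.indicator_of_mem, Set.indicator_of_mem]
      · simpa using h
      · simp only [Set.mem_setOf_eq, hpt u z]
        exact h
  -- the coset mass is translation invariant
  have hMp : ∀ (u : EuclideanSpace ℝ (Fin n)) (c : ↥L),
      coset n Λ (u - (c : EuclideanSpace ℝ (Fin n))) = coset n Λ u := by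
    intro u c
    ext x
    simp only [coset, Set.mem_setOf_eq, hΛ, SetLike.mem_coe]
    rw [show x - (u - (c : EuclideanSpace ℝ (Fin n))) = x - u + (c : EuclideanSpace ℝ (Fin n))
      by abel]
    exact Submodule.add_mem_iff_left L c.2
  -- the main estimate
  have hmain : ∫⁻ t, ENNReal.ofReal ((T t).toReal) ∂(gaussMeasure n σs)
      ≤ ENNReal.ofReal ε := by
    have hstep1 : ∫⁻ t, ENNReal.ofReal ((T t).toReal) ∂(gaussMeasure n σs)
        = ∫⁻ t, ENNReal.ofReal (gaussF n σs t) * ENNReal.ofReal ((T t).toReal) := by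
      rw [gaussMeasure, lintegral_withDensity_eq_lintegral_mul volume
        (measurable_gaussF n σs).ennreal_ofReal (hTm.ennreal_toReal.ennreal_ofReal)]
      rfl
    have hstep2 : ∫⁻ t, ENNReal.ofReal (gaussF n σs t) * ENNReal.ofReal ((T t).toReal)
        ≤ ∫⁻ t, ∑' c : ↥L, ENNReal.ofReal (gaussF n σs t * term c t) := by
      apply lintegral_mono
      intro t
      calc ENNReal.ofReal (gaussF n σs t) * ENNReal.ofReal ((T t).toReal)
          ≤ ENNReal.ofReal (gaussF n σs t) * T t :=
            mul_le_mul_right ENNReal.ofReal_toReal_le _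
        _ = ∑' c : ↥L, ENNReal.ofReal (gaussF n σs t * term c t) := by
            rw [hTdef]
            rw [← ENNReal.tsum_mul_left]
            congr 1
            funext c
            rw [← ENNReal.ofReal_mul (gaussF_nonneg n σs t)]
    have hmeas5 : ∀ c : ↥L, Measurable fun t => ENNReal.ofReal (gaussF n σs t * term c t) :=
      fun c => ((measurable_gaussF n σs).mul (hterm_m c)).ennreal_ofReal
    have hstep3 : ∫⁻ t, ∑' c : ↥L, ENNReal.ofReal (gaussF n σs t * term c t)
        = ∑' c : ↥L, ∫⁻ t, ENNReal.ofReal (gaussF n σs t * term c t) :=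
      lintegral_tsum fun c => (hmeas5 c).aemeasurable
    have hstep4 : ∀ c : ↥L, ∫⁻ t, ENNReal.ofReal (gaussF n σs t * term c t)
        = ∫⁻ u, ENNReal.ofReal (gaussF n σs (u - (c : EuclideanSpace ℝ (Fin n))) *
            (gaussF n σs u / gaussMass n σs (coset n Λ u) * g u)) := by
      intro c
      rw [← lintegral_sub_right_eq_self
        (fun t => ENNReal.ofReal (gaussF n σs t * term c t)) (c : EuclideanSpace ℝ (Fin n))]
      apply lintegral_congr
      intro u
      have h1 : term c (u - (c : EuclideanSpace ℝ (Fin n)))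
          = gaussF n σs u / gaussMass n σs (coset n Λ u) * g u := by
        rw [htermdef]
        dsimp only
        rw [sub_add_cancel, hMp u c]
      rw [h1]
    have hstep5 : ∑' c : ↥L, ∫⁻ u, ENNReal.ofReal
          (gaussF n σs (u - (c : EuclideanSpace ℝ (Fin n))) *
            (gaussF n σs u / gaussMass n σs (coset n Λ u) * g u))
        = ∫⁻ u, (∑' c : ↥L, ENNReal.ofReal (gaussF n σs (u - (c : EuclideanSpace ℝ (Fin n)))))
            * ENNReal.ofReal (gaussF n σs u / gaussMass n σs (coset n Λ u) * g u) := by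
      rw [← lintegral_tsum]
      · apply lintegral_congr
        intro u
        rw [← ENNReal.tsum_mul_right]
        congr 1
        funext c
        rw [ENNReal.ofReal_mul (gaussF_nonneg n σs _)]
      · intro c
        apply Measurable.aemeasurable
        apply Measurable.ennreal_ofReal
        apply Measurable.mul
        · exact (measurable_gaussF n σs).comp (measurable_id.sub_const _)
        · exact ((measurable_gaussF n σs).div hMm).mul hgm
    have hstep6 : ∀ u : EuclideanSpace ℝ (Fin n),
        (∑' c : ↥L, ENNReal.ofReal (gaussF n σs (u - (c : EuclideanSpace ℝ (Fin n)))))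
            * ENNReal.ofReal (gaussF n σs u / gaussMass n σs (coset n Λ u) * g u)
          ≤ ENNReal.ofReal (gaussF n σs u * g u) := by
      intro u
      have hneg : (∑' c : ↥L, ENNReal.ofReal (gaussF n σs (u - (c : EuclideanSpace ℝ (Fin n)))))
          = ∑' c : ↥L, ENNReal.ofReal (gaussF n σs (u + (c : EuclideanSpace ℝ (Fin n)))) := by
        refine (Equiv.tsum_eq (Equiv.neg ↥L) (fun c : ↥L =>
          ENNReal.ofReal (gaussF n σs (u - (c : EuclideanSpace ℝ (Fin n)))))).symm.trans
          (tsum_congr fun c => ?_)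
        simp [Equiv.neg_apply, sub_neg_eq_add]
      rw [hneg]
      by_cases hs : Summable (fun c : ↥L => gaussF n σs (u + (c : EuclideanSpace ℝ (Fin n))))
      · rw [← ENNReal.ofReal_tsum_of_nonneg (fun c => gaussF_nonneg n σs _) hs,
          ← hMass u, ← ENNReal.ofReal_mul (by
            rw [hMass u]; exact tsum_nonneg fun c => gaussF_nonneg n σs _)]
        apply ENNReal.ofReal_le_ofReal
        by_cases hM : gaussMass n σs (coset n Λ u) = 0
        · rw [hM, zero_mul]
          exact mul_nonneg (gaussF_nonneg n σs u) (hg_nonneg u)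
        · rw [show gaussMass n σs (coset n Λ u) *
              (gaussF n σs u / gaussMass n σs (coset n Λ u) * g u)
              = gaussF n σs u * g u * (gaussMass n σs (coset n Λ u) / gaussMass n σs (coset n Λ u))
              by ring, div_self hM, mul_one]
      · have hM0 : gaussMass n σs (coset n Λ u) = 0 := by
          rw [hMass u]
          exact tsum_eq_zero_of_not_summable hs
        rw [hM0, div_zero, zero_mul, ENNReal.ofReal_zero, mul_zero]
        exact zero_le
    have hstep9 : ∫⁻ u, ENNReal.ofReal (gaussF n σs u * g u)
        ≤ ∫⁻ u, ENNReal.ofReal (gaussF n σs u) * G u := by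
      apply lintegral_mono
      intro u
      dsimp only
      rw [ENNReal.ofReal_mul (gaussF_nonneg n σs u)]
      apply mul_le_mul_right
      rw [hgG u]
      exact ENNReal.ofReal_toReal_le
    -- the gaussian convolution computation
    have hsplit := gauss_split' n (α := α) (σeff := σeff) (στ := στ) hσs hσw hα hσeff hστdef
    have hstep10 : ∫⁻ u, ENNReal.ofReal (gaussF n σs u) * G u
        = (∫⁻ y, χ y * ENNReal.ofReal (gaussF n σeff y)) := by
      have e1 : ∀ u, ENNReal.ofReal (gaussF n σs u) * G u
          = ∫⁻ z, ENNReal.ofReal (gaussF n σs u) *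
              (χ (u + α • z) * ENNReal.ofReal (gaussF n σw (u + z))) := by
        intro u
        rw [hGdef]
        dsimp only
        have hwm : Measurable fun w => D (u, w) * ENNReal.ofReal (gaussF n σw w) :=
          (hDm.comp measurable_prodMk_left).mul (measurable_gaussF n σw).ennreal_ofReal
        rw [← lintegral_const_mul _ hwm]
        rw [← lintegral_add_left_eq_self (fun w => ENNReal.ofReal (gaussF n σs u) *
          (D (u, w) * ENNReal.ofReal (gaussF n σw w))) u]
        apply lintegral_congr
        intro z
        rw [hDχ u z]
      rw [lintegral_congr e1]
      have hswap : ∫⁻ u, ∫⁻ z, ENNReal.ofReal (gaussF n σs u) *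
            (χ (u + α • z) * ENNReal.ofReal (gaussF n σw (u + z)))
          = ∫⁻ z, ∫⁻ u, ENNReal.ofReal (gaussF n σs u) *
            (χ (u + α • z) * ENNReal.ofReal (gaussF n σw (u + z))) := by
        have hPm : Measurable (fun p : EuclideanSpace ℝ (Fin n) × EuclideanSpace ℝ (Fin n) =>
            ENNReal.ofReal (gaussF n σs p.1) *
              (χ (p.1 + α • p.2) * ENNReal.ofReal (gaussF n σw (p.1 + p.2)))) := by
          apply Measurable.mul
          · exact ((measurable_gaussF n σs).comp measurable_fst).ennreal_ofReal
          · exact (hχm.comp (measurable_fst.add (measurable_snd.const_smul α))).mul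
              (((measurable_gaussF n σw).comp (measurable_fst.add measurable_snd)).ennreal_ofReal)
        exact lintegral_lintegral_swap hPm.aemeasurable
      rw [hswap]
      have e2 : ∀ z : EuclideanSpace ℝ (Fin n), ∫⁻ u, ENNReal.ofReal (gaussF n σs u) *
            (χ (u + α • z) * ENNReal.ofReal (gaussF n σw (u + z)))
          = (∫⁻ y, χ y * ENNReal.ofReal (gaussF n σeff y)) * ENNReal.ofReal (gaussF n στ z) := by
        intro z
        rw [← lintegral_sub_right_eq_self (fun u => ENNReal.ofReal (gaussF n σs u) *
          (χ (u + α • z) * ENNReal.ofReal (gaussF n σw (u + z)))) (α • z)]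
        have e3 : ∀ y : EuclideanSpace ℝ (Fin n),
            ENNReal.ofReal (gaussF n σs (y - α • z)) *
              (χ (y - α • z + α • z) * ENNReal.ofReal (gaussF n σw (y - α • z + z)))
            = (χ y * ENNReal.ofReal (gaussF n σeff y)) * ENNReal.ofReal (gaussF n στ z) := by
          intro y
          rw [sub_add_cancel, show y - α • z + z = y + (1 - α) • z by
            rw [sub_smul, one_smul]; abel]
          rw [mul_left_comm, ← ENNReal.ofReal_mul (gaussF_nonneg n σs _), hsplit y z,
            ENNReal.ofReal_mul (gaussF_nonneg n σeff _), ← mul_assoc]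
        exact (lintegral_congr e3).trans
          (lintegral_mul_const _ (hχm.mul (measurable_gaussF n σeff).ennreal_ofReal))
      rw [lintegral_congr e2, lintegral_const_mul _ (measurable_gaussF n στ).ennreal_ofReal,
        lintegral_gaussF n hστ_pos, mul_one]
    have hstep11 : (∫⁻ y, χ y * ENNReal.ofReal (gaussF n σeff y)) = gaussMeasure n σeff Vᶜ := by
      rw [gaussMeasure, withDensity_apply _ hVcm, ← lintegral_indicator hVcm]
      apply lintegral_congr
      intro y
      rw [hχdef]
      by_cases hy : y ∈ Vᶜ
      · rw [Set.indicator_of_mem hy, Set.indicator_of_mem hy, one_mul]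
      · rw [Set.indicator_of_notMem hy, Set.indicator_of_notMem hy, zero_mul]
    have hsmul := gaussMeasure_smul n hσeff_pos hVcm
    have hinv : σeff⁻¹ = errInv n ε Λ := inv_eq_of_mul_eq_one_right hnorm
    have hpre : ((σeff • ·) ⁻¹' Vᶜ : Set (EuclideanSpace ℝ (Fin n)))
        = (errInv n ε Λ • V)ᶜ := by
      ext x
      simp only [Set.mem_preimage, Set.mem_compl_iff]
      rw [← hinv]
      rw [Set.mem_smul_set_iff_inv_smul_mem₀ (inv_ne_zero (ne_of_gt hσeff_pos)), inv_inv]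
    have herrpos : 0 < errInv n ε Λ := by
      rw [← hinv]
      exact inv_pos.2 hσeff_pos
    have hspec : gaussMeasure n 1 ((errInv n ε Λ • V)ᶜ) ≤ ENNReal.ofReal ε :=
      errInv_spec n ε Λ herrpos
    calc ∫⁻ t, ENNReal.ofReal ((T t).toReal) ∂(gaussMeasure n σs)
        = ∫⁻ t, ENNReal.ofReal (gaussF n σs t) * ENNReal.ofReal ((T t).toReal) := hstep1
      _ ≤ ∫⁻ t, ∑' c : ↥L, ENNReal.ofReal (gaussF n σs t * term c t) := hstep2
      _ = ∑' c : ↥L, ∫⁻ t, ENNReal.ofReal (gaussF n σs t * term c t) := hstep3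
      _ = ∑' c : ↥L, ∫⁻ u, ENNReal.ofReal (gaussF n σs (u - (c : EuclideanSpace ℝ (Fin n))) *
            (gaussF n σs u / gaussMass n σs (coset n Λ u) * g u)) := tsum_congr hstep4
      _ = ∫⁻ u, (∑' c : ↥L, ENNReal.ofReal (gaussF n σs (u - (c : EuclideanSpace ℝ (Fin n)))))
            * ENNReal.ofReal (gaussF n σs u / gaussMass n σs (coset n Λ u) * g u) := hstep5
      _ ≤ ∫⁻ u, ENNReal.ofReal (gaussF n σs u * g u) := lintegral_mono hstep6
      _ ≤ ∫⁻ u, ENNReal.ofReal (gaussF n σs u) * G u := hstep9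
      _ = ∫⁻ y, χ y * ENNReal.ofReal (gaussF n σeff y) := hstep10
      _ = gaussMeasure n σeff Vᶜ := hstep11
      _ = gaussMeasure n 1 ((σeff • ·) ⁻¹' Vᶜ) := hsmul
      _ = gaussMeasure n 1 ((errInv n ε Λ • V)ᶜ) := by rw [hpre]
      _ ≤ ENNReal.ofReal ε := hspec
  -- conclude via Markov
  have hγε : (0:ℝ) < γ * ε := mul_pos (lt_of_lt_of_le one_pos hγ) hε0
  have hle := le_trans hmarkov hmain
  rw [show (1/γ : ℝ) = ε / (γ * ε) by field_simp]
  rw [ENNReal.ofReal_div_of_pos hγε]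
  rw [ENNReal.le_div_iff_mul_le
    (Or.inl (by simp only [ne_eq, ENNReal.ofReal_eq_zero, not_le]; exact hγε))
    (Or.inl ENNReal.ofReal_ne_top)]
  rwa [mul_comm]
end
end

section
/- Let Λ ⊂ ℝ^n be a full-rank lattice, σ_s, σ_w > 0 with σ_s < σ_w, α = σ_s²/(σ_s²+σ_w²) and σ_eff² = σ_s²σ_w²/(σ_s²+σ_w²). Let X ~ D_{Λ, σ_s} and W ~ N(0, σ_w² I_n) be independent, let P_e(Λ) = Pr[(α−1)X + αW ∉ V(Λ)], and let P_0(Λ) = Pr[X = 0] = ((2πσ_s²)^{n/2} · f_{σ_s}(Λ))^{−1}. Then P_e(Λ) ≥ (1/2)·(1 − P_0(Λ)). -/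
open MeasureTheory Real Filter Pointwise
open scoped ENNReal RealInnerProductSpace

noncomputable section

/-! ### Auxiliary lemmas -/

section Aux

lemma my_sum_int_exp {a : ℝ} (ha : 0 < a) : Summable fun k : ℤ => rexp (-a * (k : ℝ) ^ 2) := by
  have hnat : Summable fun m : ℕ => rexp (-a * (m : ℝ) ^ 2) := by
    have hgeom : Summable fun m : ℕ => rexp (-a) ^ m :=
      summable_geometric_of_lt_one (exp_pos _).le (exp_lt_one_iff.2 (by linarith))
    refine Summable.of_nonneg_of_le (fun m => (exp_pos _).le) (fun m => ?_) hgeom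
    rw [← Real.exp_nat_mul]
    apply exp_le_exp.2
    rcases Nat.eq_zero_or_pos m with h | h
    · simp [h]
    · have h1 : (1 : ℝ) ≤ (m : ℝ) := by exact_mod_cast h
      have h2 : (m : ℝ) ≤ (m:ℝ)^2 := by nlinarith
      nlinarith [mul_le_mul_of_nonneg_left h2 ha.le]
  refine Summable.of_nat_of_neg (by simpa using hnat) ?_
  simpa using hnat

lemma my_sum_pi_exp (m : ℕ) {a : ℝ} (ha : 0 < a) :
    Summable fun v : Fin m → ℤ => rexp (-a * ∑ i, ((v i : ℝ)) ^ 2) := by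
  induction m with
  | zero => exact Summable.of_finite
  | succ m ih =>
      have h := (my_sum_int_exp ha).mul_of_nonneg ih
        (fun _ => (exp_pos _).le) (fun _ => (exp_pos _).le)
      have := ((Fin.consEquiv (fun _ : Fin (m+1) => ℤ)).summable_iff
        (f := fun v : Fin (m+1) → ℤ => rexp (-a * ∑ i, ((v i : ℝ)) ^ 2))).1 ?_
      · exact this
      · refine h.congr fun p => ?_
        simp only [Function.comp, Fin.consEquiv_apply, Fin.sum_univ_succ, Fin.cons_zero,
          Fin.cons_succ]
        rw [← Real.exp_add]
        ring_nf

lemma gaussF_pos {n : ℕ} {σ : ℝ} (hσ : 0 < σ) (x : EuclideanSpace ℝ (Fin n)) :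
    0 < gaussF n σ x := by
  unfold gaussF
  have : (0:ℝ) < 2 * π * σ ^ 2 := by positivity
  positivity

lemma gaussF_eq {n : ℕ} (σ : ℝ) (x : EuclideanSpace ℝ (Fin n)) :
    gaussF n σ x = (2 * π * σ ^ 2) ^ (-(n : ℝ) / 2) * rexp (-(1/(2*σ^2)) * ‖x‖ ^ 2) := by
  unfold gaussF; ring_nf

lemma gaussF_integrable {n : ℕ} {σ : ℝ} (hσ : 0 < σ) :
    Integrable (gaussF n σ) (volume : Measure (EuclideanSpace ℝ (Fin n))) := by
  have hb : (0:ℝ) < 1/(2*σ^2) := by positivity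
  have h := (GaussianFourier.integrable_cexp_neg_mul_sq_norm_add
    (V := EuclideanSpace ℝ (Fin n)) (b := ((1/(2*σ^2) : ℝ) : ℂ))
    (by rw [Complex.ofReal_re]; exact hb) 0 0).norm
  have h2 : Integrable (fun v : EuclideanSpace ℝ (Fin n) => rexp (-(1/(2*σ^2)) * ‖v‖ ^ 2)) := by
    refine h.congr (Eventually.of_forall fun v => ?_)
    simp only []
    rw [Complex.norm_exp]
    congr 1
    have : (-(((1/(2*σ^2) : ℝ)) : ℂ) * (‖v‖ : ℂ) ^ 2
        + 0 * ((⟪(0 : EuclideanSpace ℝ (Fin n)), v⟫ : ℝ) : ℂ))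
        = ((-(1/(2*σ^2)) * ‖v‖ ^ 2 : ℝ) : ℂ) := by push_cast; ring
    rw [this, Complex.ofReal_re]
  have := h2.const_mul ((2 * π * σ ^ 2) ^ (-(n : ℝ) / 2))
  exact this.congr (Eventually.of_forall fun v => (gaussF_eq σ v).symm)

lemma gaussF_integral {n : ℕ} {σ : ℝ} (hσ : 0 < σ) :
    ∫ x : EuclideanSpace ℝ (Fin n), gaussF n σ x = 1 := by
  have hb : (0:ℝ) < 1/(2*σ^2) := by positivity
  have h := GaussianFourier.integral_rexp_neg_mul_sq_norm (V := EuclideanSpace ℝ (Fin n)) hb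
  rw [show (fun x : EuclideanSpace ℝ (Fin n) => gaussF n σ x) = fun x =>
      (2 * π * σ ^ 2) ^ (-(n : ℝ) / 2) * rexp (-(1/(2*σ^2)) * ‖x‖ ^ 2) from
      funext (gaussF_eq σ),
    integral_const_mul, h]
  rw [finrank_euclideanSpace_fin]
  have h1 : π / (1/(2*σ^2)) = 2 * π * σ ^ 2 := by field_simp
  rw [h1, ← Real.rpow_add (by positivity), show (-(n:ℝ)/2 + n/2) = 0 by ring, Real.rpow_zero]

lemma gaussF_neg {n : ℕ} (σ : ℝ) (x : EuclideanSpace ℝ (Fin n)) :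
    gaussF n σ (-x) = gaussF n σ x := by unfold gaussF; rw [norm_neg]

lemma halfspace_integral {n : ℕ} {σ : ℝ} (hσ : 0 < σ) (x : EuclideanSpace ℝ (Fin n)) :
    (1:ℝ)/2 ≤ ∫ w in {w : EuclideanSpace ℝ (Fin n) | ⟪w, x⟫ ≤ 0}, gaussF n σ w := by
  set T : Set (EuclideanSpace ℝ (Fin n)) := {w | ⟪w, x⟫ ≤ 0} with hT
  have hTm : MeasurableSet T :=
    (isClosed_le (continuous_id.inner continuous_const) continuous_const).measurableSet
  set T' : Set (EuclideanSpace ℝ (Fin n)) := {w | 0 ≤ ⟪w, x⟫} with hT'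
  have hT'm : MeasurableSet T' :=
    (isClosed_le continuous_const (continuous_id.inner continuous_const)).measurableSet
  have hint := gaussF_integrable (n := n) hσ
  have key : ∫ w in T, gaussF n σ w = ∫ w in T', gaussF n σ w := by
    rw [← integral_indicator hTm, ← integral_indicator hT'm]
    rw [← integral_neg_eq_self (fun w => T.indicator (gaussF n σ) w) volume]
    congr 1
    funext w
    by_cases h : 0 ≤ (⟪w, x⟫ : ℝ)
    · rw [Set.indicator_of_mem (by simpa [hT, inner_neg_left] using h),
        Set.indicator_of_mem (show w ∈ T' from h), gaussF_neg]
    · rw [Set.indicator_of_notMem (by simpa [hT, inner_neg_left] using h),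
        Set.indicator_of_notMem (show w ∉ T' from h)]
  have hcompl : ∫ w in Tᶜ, gaussF n σ w ≤ ∫ w in T', gaussF n σ w := by
    refine setIntegral_mono_set hint.integrableOn
      (Eventually.of_forall fun w => (gaussF_pos hσ w).le) (Eventually.of_forall ?_)
    intro w hw
    exact le_of_lt (not_le.mp hw)
  have hsplit := integral_add_compl hTm hint
  rw [gaussF_integral hσ] at hsplit
  linarith

lemma gaussF_summable {n : ℕ} (L : Submodule ℤ (EuclideanSpace ℝ (Fin n)))
    [DiscreteTopology L] [IsZLattice ℝ L] {σ : ℝ} (hσ : 0 < σ) :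
    Summable fun y : (L : Set (EuclideanSpace ℝ (Fin n))) => gaussF n σ y := by
  have hrank : Module.finrank ℤ L = n := by
    rw [ZLattice.rank ℝ L, finrank_euclideanSpace_fin]
  let b : Module.Basis (Fin n) ℤ L := (Module.finBasis ℤ L).reindex (finCongr hrank)
  let B := Module.Basis.ofZLatticeBasis ℝ L b
  set C : ℝ := ‖(B.equivFunL : EuclideanSpace ℝ (Fin n) →L[ℝ] (Fin n → ℝ))‖ + 1 with hCdef
  have hC : 0 < C := by positivity
  have hbound : ∀ x : EuclideanSpace ℝ (Fin n), ‖B.equivFunL x‖ ≤ C * ‖x‖ := by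
    intro x
    calc ‖B.equivFunL x‖ ≤ ‖(B.equivFunL : EuclideanSpace ℝ (Fin n) →L[ℝ] (Fin n → ℝ))‖ * ‖x‖ :=
          (B.equivFunL : EuclideanSpace ℝ (Fin n) →L[ℝ] (Fin n → ℝ)).le_opNorm x
      _ ≤ C * ‖x‖ := by
          apply mul_le_mul_of_nonneg_right _ (norm_nonneg x)
          simp [hCdef]
  set a : ℝ := 1 / (2 * σ ^ 2 * (n + 1) * C ^ 2) with hadef
  have ha : 0 < a := by positivity
  have hkey : ∀ y : L, gaussF n σ y ≤
      (2 * π * σ ^ 2) ^ (-(n : ℝ) / 2) * rexp (-a * ∑ i, ((b.repr y i : ℝ)) ^ 2) := by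
    intro y
    unfold gaussF
    have hc : (0:ℝ) < (2 * π * σ ^ 2) ^ (-(n : ℝ) / 2) := by
      have : (0:ℝ) < 2 * π * σ ^ 2 := by positivity
      positivity
    apply mul_le_mul_of_nonneg_left _ hc.le
    apply exp_le_exp.2
    rw [neg_div, neg_mul, neg_le_neg_iff]
    have hcoord : ∀ i, ((b.repr y i : ℝ)) ^ 2 ≤ C ^ 2 * ‖(y : EuclideanSpace ℝ (Fin n))‖ ^ 2 := by
      intro i
      have h1 : ((b.repr y i : ℝ)) = B.equivFunL (y : EuclideanSpace ℝ (Fin n)) i := by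
        rw [Module.Basis.equivFunL_apply]
        simp [B]
      have h2 : |B.equivFunL (y : EuclideanSpace ℝ (Fin n)) i| ≤
          ‖B.equivFunL (y : EuclideanSpace ℝ (Fin n))‖ := by
        simpa [Real.norm_eq_abs] using
          norm_le_pi_norm (B.equivFunL (y : EuclideanSpace ℝ (Fin n))) i
      have h3 := (h2.trans (hbound _))
      rw [h1, ← sq_abs]
      nlinarith [abs_nonneg (B.equivFunL (y : EuclideanSpace ℝ (Fin n)) i), hC.le,
        norm_nonneg (y : EuclideanSpace ℝ (Fin n))]
    have hsum : ∑ i, ((b.repr y i : ℝ)) ^ 2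
        ≤ n * (C ^ 2 * ‖(y : EuclideanSpace ℝ (Fin n))‖ ^ 2) := by
      calc ∑ i, ((b.repr y i : ℝ)) ^ 2
          ≤ ∑ _i : Fin n, C ^ 2 * ‖(y : EuclideanSpace ℝ (Fin n))‖ ^ 2 :=
            Finset.sum_le_sum fun i _ => hcoord i
        _ = n * (C ^ 2 * ‖(y : EuclideanSpace ℝ (Fin n))‖ ^ 2) := by
            simp [Finset.sum_const, mul_comm]
    have hC2 : (0:ℝ) < C ^ 2 := by positivity
    rw [hadef]
    rw [div_mul_eq_mul_div, one_mul, div_le_div_iff₀ (by positivity) (by positivity)]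
    calc (∑ i, ((b.repr y i : ℝ)) ^ 2) * (2 * σ ^ 2)
        ≤ (n * (C ^ 2 * ‖(y : EuclideanSpace ℝ (Fin n))‖ ^ 2)) * (2 * σ ^ 2) := by
          apply mul_le_mul_of_nonneg_right hsum (by positivity)
      _ ≤ ‖(y : EuclideanSpace ℝ (Fin n))‖ ^ 2 * (2 * σ ^ 2 * (n + 1) * C ^ 2) := by
          nlinarith [sq_nonneg (‖(y : EuclideanSpace ℝ (Fin n))‖), hC2, sq_nonneg σ,
            mul_nonneg (mul_nonneg (by positivity : (0:ℝ) ≤ 2 * σ ^ 2) hC2.le)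
              (sq_nonneg (‖(y : EuclideanSpace ℝ (Fin n))‖))]
  have hmajor : Summable fun y : L => rexp (-a * ∑ i, ((b.repr y i : ℝ)) ^ 2) := by
    have hs := my_sum_pi_exp n ha
    have := (b.equivFun.toEquiv.symm.summable_iff
      (f := fun y : L => rexp (-a * ∑ i, ((b.repr y i : ℝ)) ^ 2))).1 ?_
    · exact this
    · refine hs.congr fun v => ?_
      simp only [Function.comp]
      have hv : ∀ i, b.repr (b.equivFun.toEquiv.symm v) i = v i := by
        intro i
        have h0 : (b.equivFun.toEquiv.symm v) = b.equivFun.symm v := rfl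
        rw [h0, ← Module.Basis.equivFun_apply, LinearEquiv.apply_symm_apply]
      simp only [hv]
  exact Summable.of_nonneg_of_le (fun y => (gaussF_pos hσ _).le) (fun y => hkey y)
    (hmajor.mul_left _)

end Aux

/-- for `σ_s < σ_w`, the MAP error probability of the centered discrete
Gaussian satisfies `P_e(Λ) ≥ (1/2)(1 − P₀(Λ))`. -/
theorem error_probability_vs_mass_of_zero (n : ℕ) (L : Submodule ℤ (EuclideanSpace ℝ (Fin n)))
    [DiscreteTopology L] [IsZLattice ℝ L]
    (σs σw : ℝ) (hσs : 0 < σs) (hσw : 0 < σw) (hsw : σs < σw)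
    (α σeff : ℝ)
    (hα : α = σs ^ 2 / (σs ^ 2 + σw ^ 2))
    (hσeff : σeff = Real.sqrt (σs ^ 2 * σw ^ 2 / (σs ^ 2 + σw ^ 2)))
    (Pe : ℝ)
    (hPe : Pe = ∑' x : (L : Set (EuclideanSpace ℝ (Fin n))),
        (gaussF n σs x / gaussMass n σs (L : Set (EuclideanSpace ℝ (Fin n)))) *
          ∫ w in {w : EuclideanSpace ℝ (Fin n) |
              (α - 1) • (x : EuclideanSpace ℝ (Fin n)) + α • w ∉ voronoi n (L : Set (EuclideanSpace ℝ (Fin n)))},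
            gaussF n σw w)
    (P0 : ℝ)
    (hP0 : P0 = ((2 * π * σs ^ 2) ^ ((n : ℝ) / 2) * gaussMass n σs (L : Set (EuclideanSpace ℝ (Fin n))))⁻¹) :
    (1 / 2) * (1 - P0) ≤ Pe := by
  classical
  set S : Set (EuclideanSpace ℝ (Fin n)) := (L : Set (EuclideanSpace ℝ (Fin n))) with hS
  have hsum : Summable fun y : S => gaussF n σs y := gaussF_summable L hσs
  set M : ℝ := gaussMass n σs S with hM
  have hMpos : 0 < M := by
    rw [hM]
    exact Summable.tsum_pos hsum (fun y => (gaussF_pos hσs _).le) ⟨0, L.zero_mem⟩ (gaussF_pos hσs _)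
  set p : S → ℝ := fun x => gaussF n σs x / M with hp
  have hpsum : Summable p := hsum.div_const M
  have hpnonneg : ∀ x, 0 ≤ p x := fun x => div_nonneg (gaussF_pos hσs _).le hMpos.le
  have htsum_p : ∑' x, p x = 1 := by
    have h1 : ∑' x, p x = (∑' x : S, gaussF n σs x) * M⁻¹ := by
      simp only [hp, div_eq_mul_inv]
      exact tsum_mul_right
    rw [h1]
    exact mul_inv_cancel₀ (ne_of_gt hMpos)
  -- positivity facts about α
  have hw2 : (0:ℝ) < σs ^ 2 + σw ^ 2 := by positivity
  have hα0 : 0 < α := by rw [hα]; positivity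
  have hα2 : α < 1/2 := by
    rw [hα, div_lt_iff₀ hw2]
    nlinarith
  -- the integral terms
  set I : S → ℝ := fun x => ∫ w in {w : EuclideanSpace ℝ (Fin n) |
      (α - 1) • (x : EuclideanSpace ℝ (Fin n)) + α • w ∉ voronoi n S}, gaussF n σw w with hI
  have hint := gaussF_integrable (n := n) hσw
  have hI0 : ∀ x, 0 ≤ I x := fun x => integral_nonneg fun w => (gaussF_pos hσw _).le
  have hI1 : ∀ x, I x ≤ 1 := by
    intro x
    have : I x ≤ ∫ w in (Set.univ : Set (EuclideanSpace ℝ (Fin n))), gaussF n σw w := by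
      refine setIntegral_mono_set hint.integrableOn
        (Eventually.of_forall fun w => (gaussF_pos hσw _).le)
        ((Set.subset_univ _).eventuallyLE)
    rwa [setIntegral_univ, gaussF_integral hσw] at this
  have hIhalf : ∀ x : S, (x : EuclideanSpace ℝ (Fin n)) ≠ 0 → (1:ℝ)/2 ≤ I x := by
    intro x hx
    have hsub : {w : EuclideanSpace ℝ (Fin n) | ⟪w, (x : EuclideanSpace ℝ (Fin n))⟫ ≤ 0} ⊆
        {w : EuclideanSpace ℝ (Fin n) |
          (α - 1) • (x : EuclideanSpace ℝ (Fin n)) + α • w ∉ voronoi n S} := by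
      intro w hw hmem
      have hnx : -(x : EuclideanSpace ℝ (Fin n)) ∈ S :=
        SetLike.mem_coe.mpr (L.neg_mem (SetLike.mem_coe.mp x.2))
      have h := hmem (-(x : EuclideanSpace ℝ (Fin n))) hnx
      rw [inner_neg_right, inner_add_left, real_inner_smul_left, real_inner_smul_left,
        real_inner_self_eq_norm_sq, norm_neg] at h
      have hw0 : (⟪w, (x : EuclideanSpace ℝ (Fin n))⟫ : ℝ) ≤ 0 := hw
      have hxpos : 0 < ‖(x : EuclideanSpace ℝ (Fin n))‖ ^ 2 := by
        have := norm_pos_iff.mpr hx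
        positivity
      nlinarith [mul_nonpos_of_nonneg_of_nonpos hα0.le hw0]
    have h1 := halfspace_integral hσw (x : EuclideanSpace ℝ (Fin n))
    have h2 : ∫ w in {w : EuclideanSpace ℝ (Fin n) |
          ⟪w, (x : EuclideanSpace ℝ (Fin n))⟫ ≤ 0}, gaussF n σw w ≤ I x :=
      setIntegral_mono_set hint.integrableOn
        (Eventually.of_forall fun w => (gaussF_pos hσw _).le)
        (Eventually.of_forall fun w hw => hsub hw)
    linarith
  -- the zero element
  set z0 : S := ⟨0, L.zero_mem⟩ with hz0
  have hP0' : P0 = p z0 := by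
    have hpos : (0:ℝ) < 2 * π * σs ^ 2 := by positivity
    have h0 : gaussF n σs ((z0 : S) : EuclideanSpace ℝ (Fin n)) =
        (2 * π * σs ^ 2) ^ (-(n : ℝ) / 2) := by
      unfold gaussF
      simp [hz0]
    have h1 : p z0 = (2 * π * σs ^ 2) ^ (-(n : ℝ) / 2) / M := by
      simp only [hp]
      rw [h0]
    rw [h1, hP0, neg_div, Real.rpow_neg hpos.le, mul_inv, div_eq_mul_inv]
    ring
  have hP0nonneg : 0 ≤ P0 := by rw [hP0']; exact hpnonneg z0
  -- Pe as a tsum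
  set F : S → ℝ := fun x => p x * I x with hF
  have hPe' : Pe = ∑' x, F x := hPe
  have hFsum : Summable F :=
    Summable.of_nonneg_of_le (fun x => mul_nonneg (hpnonneg x) (hI0 x))
      (fun x => by
        calc p x * I x ≤ p x * 1 := mul_le_mul_of_nonneg_left (hI1 x) (hpnonneg x)
          _ = p x := mul_one _) hpsum
  set f2 : S → ℝ := fun x => 1/2 * p x with hf2
  have hf2sum : Summable f2 := hpsum.mul_left _
  have hgle : ∀ x, (if x = z0 then 0 else f2 x) ≤ F x := by
    intro x
    by_cases h : x = z0
    · simp only [h, if_pos rfl]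
      exact mul_nonneg (hpnonneg z0) (hI0 z0)
    · rw [if_neg h]
      have hx : (x : EuclideanSpace ℝ (Fin n)) ≠ 0 := by
        intro hc
        exact h (Subtype.ext hc)
      calc 1/2 * p x ≤ I x * p x :=
            mul_le_mul_of_nonneg_right (hIhalf x hx) (hpnonneg x)
        _ = p x * I x := mul_comm _ _
  have hgsum : Summable fun x => if x = z0 then 0 else f2 x := by
    refine Summable.of_nonneg_of_le (fun x => ?_) (fun x => ?_) hf2sum
    · by_cases h : x = z0
      · simp [h]
      · rw [if_neg h]; exact mul_nonneg (by norm_num) (hpnonneg x)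
    · by_cases h : x = z0
      · simp only [h, if_pos rfl]
        exact mul_nonneg (by norm_num) (hpnonneg z0)
      · rw [if_neg h]
  have hcmp : ∑' x, (if x = z0 then 0 else f2 x) ≤ ∑' x, F x :=
    Summable.tsum_le_tsum hgle hgsum hFsum
  have hsplit : ∑' x, f2 x = f2 z0 + ∑' x, (if x = z0 then 0 else f2 x) :=
    Summable.tsum_eq_add_tsum_ite hf2sum z0
  have htf2 : ∑' x, f2 x = 1/2 := by
    rw [hf2, tsum_mul_left, htsum_p, mul_one]
  have hfz0 : f2 z0 = 1/2 * P0 := by rw [hf2, hP0']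
  rw [hPe']
  have : ∑' x, (if x = z0 then 0 else f2 x) = 1/2 - 1/2 * P0 := by
    rw [← hfz0]
    linarith [hsplit, htf2]
  linarith [hcmp, this]
end
end
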